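/- If F: X → ℝ≥0 is differentiable, monotone, and weakly DR-submodular with parameter γ, then for any x, z in X with x ≤ z, F(z) - F(x) ≥ γ ⟨∇F(z), z - x⟩. -/

import Mathlib

/-- STATEMENT 0: For a differentiable, monotone, weakly DR-submodular function `F` with
parameter `γ` on a product of compact intervals `X ⊆ ℝ₊ⁿ`, for all `x ≤ z` in `X`,
`F z - F x ≤ (1/γ) ⟨∇F x, z - x⟩`. -/
theorem stmt_1 (n : ℕ) (a b : Fin n → ℝ) (ha : ∀ i, 0 ≤ a i)
    (X : Set (EuclideanSpace ℝ (Fin n)))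
    (hX : X = {x : EuclideanSpace ℝ (Fin n) | ∀ i, x i ∈ Set.Icc (a i) (b i)})
    (F : EuclideanSpace ℝ (Fin n) → ℝ)
    (g : EuclideanSpace ℝ (Fin n) → EuclideanSpace ℝ (Fin n))
    (hF0 : ∀ x ∈ X, 0 ≤ F x)
    (hdiff : ∀ x ∈ X, HasGradientAt F (g x) x)
    (hmono : ∀ x ∈ X, ∀ y ∈ X, (∀ i, x i ≤ y i) → F x ≤ F y)
    (γ : ℝ) (hγ : 0 < γ)
    (hweak : ∀ x ∈ X, ∀ y ∈ X, (∀ i, x i ≤ y i) → ∀ i, γ * g y i ≤ g x i) :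
    ∀ x ∈ X, ∀ z ∈ X, (∀ i, x i ≤ z i) →
      γ * ∑ i, g z i * (z i - x i) ≤ F z - F x := by
  intro x hx z hz hxz
  set v : EuclideanSpace ℝ (Fin n) := z - x with hvdef
  have hv : ∀ i, v i = z i - x i := fun i => rfl
  set y : ℝ → EuclideanSpace ℝ (Fin n) := fun t => x + t • v with hydef
  have hyi : ∀ t i, y t i = x i + t * (z i - x i) := by
    intro t i
    simp [hydef, hv]
  have hybd : ∀ t ∈ Set.Icc (0:ℝ) 1, ∀ i, x i ≤ y t i ∧ y t i ≤ z i := by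
    intro t ht i
    rw [hyi]
    constructor
    · nlinarith [hxz i, ht.1, ht.2]
    · nlinarith [hxz i, ht.1, ht.2]
  have hyX : ∀ t ∈ Set.Icc (0:ℝ) 1, y t ∈ X := by
    intro t ht
    rw [hX]
    intro i
    have hxX := hX ▸ hx
    have hzX := hX ▸ hz
    exact ⟨le_trans (hxX i).1 (hybd t ht i).1, le_trans (hybd t ht i).2 (hzX i).2⟩
  have hder : ∀ t ∈ Set.Icc (0:ℝ) 1,
      HasDerivAt (fun t => F (y t)) (∑ i, g (y t) i * v i) t := by
    intro t ht
    have h1 : HasDerivAt y v t := by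
      have : HasDerivAt (fun s : ℝ => x + s • v) ((1:ℝ) • v) t :=
        ((hasDerivAt_id t).smul_const v).const_add x
      simpa [hydef] using this
    have h2 := (hdiff (y t) (hyX t ht)).hasFDerivAt
    have h3 := h2.comp_hasDerivAt t h1
    have h4 : (∑ i, g (y t) i * v i) = (InnerProductSpace.toDual ℝ _ (g (y t))) v := by
      simp [InnerProductSpace.toDual_apply_apply, PiLp.inner_apply, mul_comm]
    rw [h4]; exact h3
  obtain ⟨c, hc, hceq⟩ := exists_hasDerivAt_eq_slope (fun t => F (y t))
      (fun t => ∑ i, g (y t) i * v i) one_pos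
      (fun t ht => (hder t ht).continuousAt.continuousWithinAt)
      (fun t ht => hder t (Set.Ioo_subset_Icc_self ht))
  have hy0 : y 0 = x := by simp [hydef]
  have hy1 : y 1 = z := by simp [hydef, hvdef]
  rw [hy0, hy1] at hceq
  have hceq' : F z - F x = ∑ i, g (y c) i * v i := by
    rw [hceq]; ring
  rw [hceq']
  have hcIcc : c ∈ Set.Icc (0:ℝ) 1 := Set.Ioo_subset_Icc_self hc
  have hleq : ∀ i, γ * g z i ≤ g (y c) i :=
    hweak (y c) (hyX c hcIcc) z hz (fun i => (hybd c hcIcc i).2)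
  rw [Finset.mul_sum]
  apply Finset.sum_le_sum
  intro i _
  rw [hv]
  have h1 : 0 ≤ z i - x i := sub_nonneg.2 (hxz i)
  nlinarith [hleq i]
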